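/- Let α ∈ T(X,Y,Z). If α is a regular element of T(X,Y,Z) (i.e., there exists β ∈ T(X,Y,Z) with α = αβα), then α(X) ∩ Y ⊆ α(Z). -/
import Mathlib

/-- If α ∈ T(X,Y,Z) is regular in T(X,Y,Z) then α(X) ∩ Y ⊆ α(Z). -/
theorem stmt_1 {X : Type*} [Nonempty X] (Y Z : Set X) (hZY : Z ⊆ Y)
    (hZ : Z.Nonempty)
    (α : X → X) (hα : α '' Y ⊆ Z)
    (hreg : ∃ β : X → X, β '' Y ⊆ Z ∧ α ∘ β ∘ α = α) :
    Set.range α ∩ Y ⊆ α '' Z := by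
  rintro y ⟨⟨x, rfl⟩, hY⟩
  obtain ⟨β, hβ, hc⟩ := hreg
  exact ⟨β (α x), hβ ⟨α x, hY, rfl⟩, congrFun hc x⟩
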